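/- For n ≥ 2, swapping the last two entries of a permutation w = w_1...w_n ∈ S_n changes as(w) by exactly 1 (it either increases or decreases as by 1). -/

import Mathlib

/-- The list of values of a permutation of `Fin n` (0-indexed; relative order
is what matters). -/
def permList (n : ℕ) (w : Equiv.Perm (Fin n)) : List ℕ :=
  List.ofFn (fun i => (w i : ℕ))

/-- A list is alternating: `a > b < c > d < ⋯` (descents in even positions). -/
def IsAlt (l : List ℕ) : Prop :=
  ∀ i : ℕ, ∀ hi : i + 1 < l.length,
    if i % 2 = 0 then l.get ⟨i + 1, hi⟩ < l.get ⟨i, Nat.lt_of_succ_lt hi⟩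
    else l.get ⟨i, Nat.lt_of_succ_lt hi⟩ < l.get ⟨i + 1, hi⟩

/-- `asLen n w` : the maximum length of an alternating subsequence of `w`. -/
noncomputable def asLen (n : ℕ) (w : Equiv.Perm (Fin n)) : ℕ :=
  sSup {k | ∃ l : List ℕ, l.Sublist (permList n w) ∧ IsAlt l ∧ l.length = k}

/-- `aCount n k = #{w ∈ S_n : as(w) = k}`. -/
noncomputable def aCount (n k : ℕ) : ℕ :=
  Nat.card {w : Equiv.Perm (Fin n) // asLen n w = k}

/-- `bCount n k = #{w ∈ S_n : as(w) ≤ k}`. -/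
noncomputable def bCount (n k : ℕ) : ℕ :=
  Nat.card {w : Equiv.Perm (Fin n) // asLen n w ≤ k}

namespace AltAux

def rel (b : Bool) (u v : ℕ) : Prop := if b then v < u else u < v

def Alt : Bool → List ℕ → Prop
  | _, [] => True
  | _, [_] => True
  | b, x :: y :: t => rel b x y ∧ Alt (!b) (y :: t)

@[simp] lemma alt_nil (b : Bool) : Alt b [] := trivial
@[simp] lemma alt_single (b : Bool) (x : ℕ) : Alt b [x] := trivial
@[simp] lemma alt_cons₂ (b : Bool) (x y : ℕ) (t : List ℕ) :
    Alt b (x :: y :: t) ↔ rel b x y ∧ Alt (!b) (y :: t) := Iff.rfl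

def dir (u v : ℕ) : Bool := decide (v < u)

def dirs : List ℕ → List Bool
  | [] => []
  | [_] => []
  | x :: y :: t => dir x y :: dirs (y :: t)

@[simp] lemma dirs_nil : dirs [] = [] := rfl
@[simp] lemma dirs_single (x : ℕ) : dirs [x] = [] := rfl
@[simp] lemma dirs_cons₂ (x y : ℕ) (t : List ℕ) :
    dirs (x :: y :: t) = dir x y :: dirs (y :: t) := rfl

lemma dirs_cons (x : ℕ) (s : List ℕ) (hs : s ≠ []) :
    dirs (x :: s) = dir x s.headI :: dirs s := by
  cases s with
  | nil => exact absurd rfl hs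
  | cons y t => rfl

@[simp] lemma dirs_length (l : List ℕ) : (dirs l).length = l.length - 1 := by
  induction l with
  | nil => simp
  | cons x t ih =>
    cases t with
    | nil => simp
    | cons y u => simp at ih ⊢; omega

def C : Bool → List Bool → ℕ
  | _, [] => 0
  | b, d :: D => (if d = b then 0 else 1) + C d D

@[simp] lemma C_nil (b : Bool) : C b [] = 0 := rfl
@[simp] lemma C_cons (b d : Bool) (D : List Bool) :
    C b (d :: D) = (if d = b then 0 else 1) + C d D := rfl

lemma C_le_C_succ (b b' : Bool) (D : List Bool) : C b D ≤ C b' D + 1 := by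
  cases D with
  | nil => simp
  | cons d D => simp only [C_cons]; split <;> split <;> omega

/-- boolean counting lemma -/
lemma count_ge {A D : List Bool} (h : A.Sublist D) :
    A.Chain' (fun p q => q = !p) → ∀ b : Bool,
    A.length ≤ C b D + (if A.head? = some b then 1 else 0) := by
  induction h with
  | slnil => simp
  | @cons A' D' d h ih =>
    intro hA b
    have hd := ih hA d
    simp only [C_cons]
    by_cases hh : A'.head? = some d
    · by_cases hdb : d = b
      · subst hdb; simp [hh] at hd ⊢; omega
      · have hhb : A'.head? ≠ some b := by
          rw [hh]; simp; intro e; exact hdb e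
        simp [hh] at hd
        simp [hhb, hdb]; omega
    · simp [hh] at hd; split <;> split <;> omega
  | @cons_cons A' D' a h ih =>
    intro hA b
    have hch : A'.Chain' (fun p q => q = !p) := hA.tail
    have hh : A'.head? ≠ some a := by
      cases A' with
      | nil => simp
      | cons z t =>
        have := (List.isChain_cons_cons.mp hA).1
        simp [this]
    have hd := ih hch a
    simp [hh] at hd
    simp only [List.length_cons, C_cons, List.head?_cons]
    by_cases hab : a = b
    · subst hab; simp; omega
    · simp [hab]; omega

end AltAux

namespace AltAux

lemma dir_trans {x y h : ℕ} (hne : dir x h ≠ dir x y) : dir y h = dir x h := by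
  simp only [dir, ne_eq, decide_eq_decide] at hne
  have : (h < x ∧ ¬ y < x) ∨ (¬ h < x ∧ y < x) := by tauto
  rcases this with ⟨h1, h2⟩ | ⟨h1, h2⟩ <;>
    simp only [dir, decide_eq_decide] <;> omega

lemma dirs_sublist_aux :
    ∀ n (l s : List ℕ), l.length ≤ n → s.Sublist l →
      (dirs s).Sublist (dirs l) ∧
      (∀ x : ℕ, s ≠ [] → (dir x s.headI :: dirs s).Sublist (dirs (x :: l))) := by
  intro n
  induction n with
  | zero =>
    intro l s hl hs
    have : l = [] := List.length_eq_zero_iff.mp (Nat.le_zero.mp hl)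
    subst this
    have : s = [] := List.sublist_nil.mp hs
    subst this
    exact ⟨List.Sublist.refl _, fun x h => absurd rfl h⟩
  | succ n ih =>
    intro l s hl hs
    constructor
    · -- P part
      cases hs with
      | slnil => exact List.Sublist.refl _
      | @cons s l' x h =>
        have hl' : l'.length ≤ n := by simp at hl; omega
        have ihP := (ih l' s hl' h).1
        cases l' with
        | nil => simpa using ihP
        | cons y t =>
          exact ihP.trans ((dirs_cons x (y :: t) (by simp)) ▸
            (List.Sublist.cons _ (List.Sublist.refl _)))
      | @cons_cons s' l' x h =>
        have hl' : l'.length ≤ n := by simp at hl; omega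
        rcases eq_or_ne s' [] with rfl | hne
        · simp
        · rw [dirs_cons x s' hne]
          have hl'' : l' ≠ [] := by
            rintro rfl; exact hne (List.sublist_nil.mp h)
          exact (ih l' s' hl' h).2 x hne
    · -- Q part
      intro x hne
      cases l with
      | nil => exact absurd (List.sublist_nil.mp hs) hne
      | cons y t =>
        have hl' : t.length ≤ n := by simp at hl; omega
        cases hs with
        | @cons s _ _ h =>
          have ht : t ≠ [] := by rintro rfl; exact hne (List.sublist_nil.mp h)
          by_cases hdd : dir x s.headI = dir x y
          · rw [dirs_cons x (y :: t) (by simp), hdd]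
            apply List.Sublist.cons₂
            exact ((ih t s hl' h).1).trans
              ((dirs_cons y t ht) ▸ (List.Sublist.cons _ (List.Sublist.refl _)))
          · have heq : dir y s.headI = dir x s.headI := dir_trans hdd
            rw [dirs_cons x (y :: t) (by simp)]
            exact List.Sublist.cons _ (heq ▸ (ih t s hl' h).2 y hne)
        | @cons_cons s' _ _ h =>
          rw [dirs_cons x (y :: t) (by simp)]
          simp only [List.headI]
          apply List.Sublist.cons₂
          rcases eq_or_ne s' [] with rfl | hne'
          · simp
          · rw [dirs_cons y s' hne']
            exact (ih t s' hl' h).2 y hne'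

lemma dirs_sublist {l s : List ℕ} (hs : s.Sublist l) : (dirs s).Sublist (dirs l) :=
  (dirs_sublist_aux l.length l s le_rfl hs).1

end AltAux

namespace AltAux

lemma alt_dirs : ∀ (b : Bool) (s : List ℕ), Alt b s →
    (dirs s).Chain' (fun p q => q = !p) ∧ ∀ x ∈ (dirs s).head?, x = b
  | b, [], _ => by simp [List.Chain']
  | b, [x], _ => by simp [List.Chain']
  | b, x :: y :: t, h => by
    obtain ⟨h1, h2⟩ := h
    have ih := alt_dirs (!b) (y :: t) h2
    have hdir : dir x y = b := by
      cases b with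
      | true => simp [rel] at h1; simp [dir, h1]
      | false => simp [rel] at h1; simp [dir]; omega
    rw [dirs_cons₂]
    constructor
    · rw [List.Chain', List.isChain_cons]
      refine ⟨fun z hz => ?_, ih.1⟩
      rw [ih.2 z hz, hdir]
    · simp [hdir]

lemma upper {l s : List ℕ} (hs : s.Sublist l) (ha : Alt true s) :
    s.length ≤ 1 + C false (dirs l) := by
  rcases eq_or_ne s [] with rfl | hne
  · simp
  · have hA := alt_dirs true s ha
    have hsub := dirs_sublist hs
    have hcount := count_ge hsub hA.1 false
    have hhead : (if (dirs s).head? = some false then 1 else 0) = 0 := by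
      cases hh : (dirs s).head? with
      | none => simp
      | some z => have := hA.2 z (by simp [hh]); simp [this]
    rw [hhead] at hcount
    have hlen : (dirs s).length = s.length - 1 := dirs_length s
    have : 1 ≤ s.length := List.length_pos_iff.mpr hne
    omega

lemma lower : ∀ (l : List ℕ), l ≠ [] → l.Chain' (· ≠ ·) → ∀ b : Bool,
    ∃ s : List ℕ, s.Sublist l ∧ Alt (!b) s ∧ s.length = 1 + C b (dirs l) ∧
      (b = true → s.headI ≤ l.headI) ∧ (b = false → l.headI ≤ s.headI)
  | [], h, _, _ => absurd rfl h
  | [x], _, _, b => ⟨[x], List.Sublist.refl _, by simp, by simp, by simp, by simp⟩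
  | x :: y :: t, _, hch, b => by
    obtain ⟨hxy, hch'⟩ := List.isChain_cons_cons.mp hch
    obtain ⟨s', hs1, hs2, hs3, hs4, hs5⟩ := lower (y :: t) (by simp) hch' (dir x y)
    have hne' : s' ≠ [] := by rintro rfl; simp at hs3; omega
    by_cases hdb : dir x y = b
    · subst hdb
      refine ⟨s', hs1.trans (List.Sublist.cons _ (List.Sublist.refl _)), hs2, ?_, ?_, ?_⟩
      · rw [dirs_cons₂, C_cons, if_pos rfl]; omega
      · intro hb
        have h1 := hs4 hb
        have h2 : y < x := by simpa [dir] using hb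
        simp only [List.headI] at h1 ⊢
        omega
      · intro hb
        have h1 := hs5 hb
        have h2 : ¬ y < x := by simpa [dir] using hb
        have h3 : x < y := lt_of_le_of_ne (by omega) hxy
        simp only [List.headI] at h1 ⊢
        omega
    · refine ⟨x :: s', List.Sublist.cons₂ _ hs1, ?_, ?_, by simp, by simp⟩
      · cases hs' : s' with
        | nil => exact absurd hs' hne'
        | cons z rest =>
          subst hs'
          rw [alt_cons₂]
          constructor
          · -- rel (!b) x z  with !b = dir x y
            have hbd : (!b) = dir x y := by
              cases b <;> cases hd : dir x y <;> simp_all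
            rw [hbd]
            cases hd : dir x y with
            | true =>
              have hz : z ≤ y := by simpa using hs4 (by rw [hd])
              have : y < x := by simpa [dir] using hd
              simp [rel]; omega
            | false =>
              have hz : y ≤ z := by simpa using hs5 (by rw [hd])
              have hyx : ¬ y < x := by simpa [dir] using hd
              have : x < y := lt_of_le_of_ne (by omega) hxy
              simp [rel]; omega
          · simp only [Bool.not_not]
            have hbd : b = !(dir x y) := by
              cases b <;> cases hd : dir x y <;> simp_all
            rw [hbd]
            exact hs2
      · rw [dirs_cons₂, C_cons, if_neg hdb]
        simp only [List.length_cons, hs3]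
        omega

end AltAux

namespace AltAux

lemma alt_iff_idx : ∀ (b : Bool) (l : List ℕ), Alt b l ↔
    (∀ i : ℕ, ∀ hi : i + 1 < l.length,
      rel (if i % 2 = 0 then b else !b)
        (l.get ⟨i, Nat.lt_of_succ_lt hi⟩) (l.get ⟨i + 1, hi⟩))
  | b, [] => by simp
  | b, [x] => by simp
  | b, x :: y :: t => by
    rw [alt_cons₂, alt_iff_idx (!b) (y :: t)]
    constructor
    · rintro ⟨h1, h2⟩ i hi
      cases i with
      | zero => simpa using h1
      | succ j =>
        have hj : j + 1 < (y :: t).length := by simpa using hi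
        have := h2 j hj
        by_cases hp : j % 2 = 0
        · have hp' : ¬ (j + 1) % 2 = 0 := by omega
          simp only [hp, if_pos, if_true] at this
          simp only [hp', if_neg, if_false]
          simpa using this
        · have hp' : (j + 1) % 2 = 0 := by omega
          simp only [hp, if_neg, if_false, Bool.not_not] at this
          simp only [hp', if_pos, if_true]
          simpa using this
    · intro h
      refine ⟨by simpa using h 0 (by simp), fun j hj => ?_⟩
      have hi : (j + 1) + 1 < (x :: y :: t).length := by simpa using hj
      have := h (j + 1) hi
      by_cases hp : j % 2 = 0
      · have hp' : ¬ (j + 1) % 2 = 0 := by omega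
        simp only [hp', if_neg, if_false] at this
        simp only [hp, if_pos, if_true]
        simpa using this
      · have hp' : (j + 1) % 2 = 0 := by omega
        simp only [hp', if_pos, if_true] at this
        simp only [hp, if_neg, if_false, Bool.not_not]
        simpa using this

end AltAux

namespace AltAux

lemma isAlt_iff_alt (l : List ℕ) : IsAlt l ↔ Alt true l := by
  rw [alt_iff_idx, IsAlt]
  constructor
  · intro h i hi
    have := h i hi
    by_cases hp : i % 2 = 0 <;> simp [rel, hp] at this ⊢ <;> exact this
  · intro h i hi
    have := h i hi
    by_cases hp : i % 2 = 0 <;> simp [rel, hp] at this ⊢ <;> exact this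

lemma isAlt_nil : IsAlt [] := by
  intro i hi
  simp at hi

lemma sSup_eq (l : List ℕ) (hne : l ≠ []) (hch : l.Chain' (· ≠ ·)) :
    sSup {k | ∃ s : List ℕ, s.Sublist l ∧ IsAlt s ∧ s.length = k}
      = 1 + C false (dirs l) := by
  have hbdd : BddAbove {k | ∃ s : List ℕ, s.Sublist l ∧ IsAlt s ∧ s.length = k} := by
    refine ⟨l.length, fun k hk => ?_⟩
    obtain ⟨s, hs, _, hlen⟩ := hk
    exact hlen ▸ hs.length_le
  apply le_antisymm
  · refine csSup_le ⟨0, ⟨[], List.nil_sublist l, isAlt_nil, rfl⟩⟩ ?_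
    rintro k ⟨s, hs, ha, rfl⟩
    exact upper hs ((isAlt_iff_alt s).mp ha)
  · apply le_csSup hbdd
    obtain ⟨s, hs1, hs2, hs3, -, -⟩ := lower l hne hch false
    exact ⟨s, hs1, (isAlt_iff_alt s).mpr (by simpa using hs2), by omega⟩

lemma C_append (E : List Bool) : ∀ (D : List Bool) (b : Bool),
    C b (D ++ E) = C b D + C (D.getLastD b) E
  | [], b => by simp
  | d :: D, b => by
    simp only [List.cons_append, C_cons, C_append E D d, List.getLastD_cons]
    omega

lemma dirs_append : ∀ (p : List ℕ) (hp : p ≠ []) (q : List ℕ) (hq : q ≠ []),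
    dirs (p ++ q) = dirs p ++ dir (p.getLast hp) q.headI :: dirs q
  | [], hp, _, _ => absurd rfl hp
  | [x], _, q, hq => by
    simp [dirs_cons x q hq]
  | x :: y :: t, _, q, hq => by
    have := dirs_append (y :: t) (by simp) q hq
    simp only [List.cons_append, dirs_cons₂] at this ⊢
    rw [this, List.getLast_cons (by simp : (y :: t : List ℕ) ≠ [])]

end AltAux

namespace AltAux

lemma tail_cmp (e : Bool) (c a b : ℕ) (hab : a ≠ b) (hca : c ≠ a) (hcb : c ≠ b) :
    C e [dir c a, dir a b] = C e [dir c b, dir b a] + 1 ∨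
    C e [dir c b, dir b a] = C e [dir c a, dir a b] + 1 := by
  rcases Nat.lt_trichotomy a b with h1 | h1 | h1
  · rcases Nat.lt_trichotomy c a with h2 | h2 | h2
    · -- c < a < b
      have e1 : dir c a = false := by simp [dir]; omega
      have e2 : dir a b = false := by simp [dir]; omega
      have e3 : dir c b = false := by simp [dir]; omega
      have e4 : dir b a = true := by simp [dir]; omega
      rw [e1, e2, e3, e4]; cases e <;> simp <;> omega
    · exact absurd h2 hca
    · rcases Nat.lt_trichotomy c b with h3 | h3 | h3
      · -- a < c < b
        have e1 : dir c a = true := by simp [dir]; omega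
        have e2 : dir a b = false := by simp [dir]; omega
        have e3 : dir c b = false := by simp [dir]; omega
        have e4 : dir b a = true := by simp [dir]; omega
        rw [e1, e2, e3, e4]; cases e <;> simp <;> omega
      · exact absurd h3 hcb
      · -- a < b < c
        have e1 : dir c a = true := by simp [dir]; omega
        have e2 : dir a b = false := by simp [dir]; omega
        have e3 : dir c b = true := by simp [dir]; omega
        have e4 : dir b a = true := by simp [dir]; omega
        rw [e1, e2, e3, e4]; cases e <;> simp <;> omega
  · exact absurd h1 hab
  · rcases Nat.lt_trichotomy c b with h2 | h2 | h2
    · -- c < b < a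
      have e1 : dir c a = false := by simp [dir]; omega
      have e2 : dir a b = true := by simp [dir]; omega
      have e3 : dir c b = false := by simp [dir]; omega
      have e4 : dir b a = false := by simp [dir]; omega
      rw [e1, e2, e3, e4]; cases e <;> simp <;> omega
    · exact absurd h2 hcb
    · rcases Nat.lt_trichotomy c a with h3 | h3 | h3
      · -- b < c < a
        have e1 : dir c a = false := by simp [dir]; omega
        have e2 : dir a b = true := by simp [dir]; omega
        have e3 : dir c b = true := by simp [dir]; omega
        have e4 : dir b a = false := by simp [dir]; omega
        rw [e1, e2, e3, e4]; cases e <;> simp <;> omega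
      · exact absurd h3 hca
      · -- b < a < c
        have e1 : dir c a = true := by simp [dir]; omega
        have e2 : dir a b = true := by simp [dir]; omega
        have e3 : dir c b = true := by simp [dir]; omega
        have e4 : dir b a = false := by simp [dir]; omega
        rw [e1, e2, e3, e4]; cases e <;> simp <;> omega

end AltAux

namespace AltAux

lemma permList_split (n : ℕ) (hn : 2 ≤ n) (w : Equiv.Perm (Fin n)) :
    permList n w = (permList n w).take (n - 2)
      ++ [(w ⟨n - 2, Nat.sub_lt_self (by decide) hn⟩ : ℕ), (w ⟨n - 1, Nat.sub_lt_self Nat.one_pos (by omega)⟩ : ℕ)] := by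
  have hlen : (permList n w).length = n := by simp [permList]
  apply List.ext_getElem
  · simp [permList]; omega
  · intro i h₁ h₂
    have hplen : ((permList n w).take (n - 2)).length = n - 2 := by
      rw [List.length_take, hlen]; omega
    by_cases hi : i < n - 2
    · rw [List.getElem_append_left (by omega)]
      simp [List.getElem_take]
    · rw [List.getElem_append_right (by omega)]
      simp only [hplen]
      have hi2 : i = n - 2 ∨ i = n - 1 := by rw [hlen] at h₁; omega
      rcases hi2 with rfl | rfl
      · have h0 : n - 2 - (n - 2) = 0 := by omega
        simp only [h0, List.getElem_cons_zero]
        simp [permList]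
      · have h0 : n - 1 - (n - 2) = 1 := by omega
        simp only [h0, List.getElem_cons_succ, List.getElem_cons_zero]
        simp [permList]

lemma permList_swap (n : ℕ) (hn : 2 ≤ n) (w : Equiv.Perm (Fin n)) :
    permList n (w * Equiv.swap (⟨n - 2, Nat.sub_lt_self (by decide) hn⟩ : Fin n) ⟨n - 1, Nat.sub_lt_self Nat.one_pos (by omega)⟩)
      = (permList n w).take (n - 2)
        ++ [(w ⟨n - 1, Nat.sub_lt_self Nat.one_pos (by omega)⟩ : ℕ), (w ⟨n - 2, Nat.sub_lt_self (by decide) hn⟩ : ℕ)] := by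
  have hlen : ∀ u : Equiv.Perm (Fin n), (permList n u).length = n := by
    intro u; simp [permList]
  apply List.ext_getElem
  · simp [permList]; omega
  · intro i h₁ h₂
    have hplen : ((permList n w).take (n - 2)).length = n - 2 := by
      rw [List.length_take, hlen w]; omega
    by_cases hi : i < n - 2
    · rw [List.getElem_append_left (by omega)]
      simp only [List.getElem_take, permList, List.getElem_ofFn]
      congr 1
      rw [Equiv.Perm.mul_apply]
      congr 1
      apply Equiv.swap_apply_of_ne_of_ne
      · exact Fin.ne_of_val_ne (by simp; omega)
      · exact Fin.ne_of_val_ne (by simp; omega)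
    · rw [List.getElem_append_right (by omega)]
      simp only [hplen]
      have hi2 : i = n - 2 ∨ i = n - 1 := by rw [hlen _] at h₁; omega
      rcases hi2 with rfl | rfl
      · have h0 : n - 2 - (n - 2) = 0 := by omega
        simp only [h0, List.getElem_cons_zero]
        simp only [permList, List.getElem_ofFn]
        congr 1
        rw [Equiv.Perm.mul_apply]
        congr 1
        exact Equiv.swap_apply_left _ _
      · have h0 : n - 1 - (n - 2) = 1 := by omega
        simp only [h0, List.getElem_cons_succ, List.getElem_cons_zero]
        simp only [permList, List.getElem_ofFn]
        congr 1
        rw [Equiv.Perm.mul_apply]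
        congr 1
        exact Equiv.swap_apply_right _ _

end AltAux


set_option maxHeartbeats 1000000

open AltAux

/-- Swapping the last two entries of `w` changes `as(w)` by exactly 1. -/
theorem asLen_swap_last_two (n : ℕ) (hn : 2 ≤ n) (w : Equiv.Perm (Fin n)) :
    asLen n (w * Equiv.swap (⟨n - 2, by omega⟩ : Fin n) ⟨n - 1, by omega⟩)
        = asLen n w + 1 ∨
      asLen n w
        = asLen n (w * Equiv.swap (⟨n - 2, by omega⟩ : Fin n) ⟨n - 1, by omega⟩)
            + 1 := by
  set p := (permList n w).take (n - 2) with hp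
  set a := (w ⟨n - 2, by omega⟩ : ℕ) with ha
  set b := (w ⟨n - 1, by omega⟩ : ℕ) with hb
  have h1 : permList n w = p ++ [a, b] := permList_split n hn w
  have h2 : permList n (w * Equiv.swap (⟨n - 2, by omega⟩ : Fin n) ⟨n - 1, by omega⟩)
      = p ++ [b, a] := permList_swap n hn w
  have hinj : ∀ u : Equiv.Perm (Fin n), Function.Injective (fun i : Fin n => (u i : ℕ)) := by
    intro u x y hxy
    exact u.injective (Fin.val_injective hxy)
  have hnodup : (p ++ [a, b]).Nodup := by
    rw [← h1]; exact List.nodup_ofFn.mpr (hinj w)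
  have hnodup' : (p ++ [b, a]).Nodup := by
    rw [← h2]; exact List.nodup_ofFn.mpr (hinj _)
  have hch : (p ++ [a, b]).Chain' (· ≠ ·) := List.Pairwise.isChain hnodup
  have hch' : (p ++ [b, a]).Chain' (· ≠ ·) := List.Pairwise.isChain hnodup'
  have hab : a ≠ b := by
    have := ((List.sublist_append_right p [a, b]).nodup hnodup)
    simp at this; exact this
  have e1 : asLen n w = 1 + C false (dirs (p ++ [a, b])) := by
    rw [asLen, h1]
    exact sSup_eq _ (by simp) hch
  have e2 : asLen n (w * Equiv.swap (⟨n - 2, by omega⟩ : Fin n) ⟨n - 1, by omega⟩)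
      = 1 + C false (dirs (p ++ [b, a])) := by
    rw [asLen, h2]
    exact sSup_eq _ (by simp) hch'
  clear_value p a b
  rw [e1, e2]
  rcases eq_or_ne p [] with rfl | hpne
  · simp only [List.nil_append]
    have d1 : dirs [a, b] = [dir a b] := rfl
    have d2 : dirs [b, a] = [dir b a] := rfl
    rw [d1, d2]
    rcases Nat.lt_or_ge a b with h | h
    · have g1 : dir a b = false := by simp [dir]; omega
      have g2 : dir b a = true := by simp [dir]; omega
      rw [g1, g2]; left; simp
    · have h' : b < a := lt_of_le_of_ne h (Ne.symm hab)
      have g1 : dir a b = true := by simp [dir]; omega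
      have g2 : dir b a = false := by simp [dir]; omega
      rw [g1, g2]; right; simp
  · set c := p.getLast hpne with hc
    have hcmem : c ∈ p := List.getLast_mem hpne
    have hdisj : List.Disjoint p [a, b] := (List.nodup_append'.mp hnodup).2.2
    have hca : c ≠ a := by
      intro h; exact hdisj hcmem (by simp [h])
    have hcb : c ≠ b := by
      intro h; exact hdisj hcmem (by simp [h])
    have d1 : dirs (p ++ [a, b]) = dirs p ++ dir c a :: dirs [a, b] := by
      have := dirs_append p hpne [a, b] (by simp)
      simpa using this
    have d2 : dirs (p ++ [b, a]) = dirs p ++ dir c b :: dirs [b, a] := by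
      have := dirs_append p hpne [b, a] (by simp)
      simpa using this
    have d1' : dirs (p ++ [a, b]) = dirs p ++ [dir c a, dir a b] := d1
    have d2' : dirs (p ++ [b, a]) = dirs p ++ [dir c b, dir b a] := d2
    rw [d1', d2', C_append, C_append]
    rcases tail_cmp ((dirs p).getLastD false) c a b hab hca hcb with h | h
    · right; omega
    · left; omega
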